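/- For probability measures μ, ν on ℝ^d with finite p-th moments, the function v ↦ W_p(μ_v, ν_v) on the unit sphere is Lipschitz with constant M_p(μ) + M_p(ν); in particular, since the sphere is compact, the supremum sup_{v ∈ S^{d-1}} W_p(μ_v, ν_v) is attained. -/

import Mathlib

open MeasureTheory ProbabilityTheory
open scoped ENNReal

/-- The `p`-Wasserstein distance, defined as the infimum over couplings. -/
noncomputable def wassersteinDist {X : Type*} [MeasurableSpace X] [PseudoMetricSpace X]
    (p : ℝ) (μ ν : Measure X) : ℝ :=
  ⨅ γ : {γ : Measure (X × X) // γ.map Prod.fst = μ ∧ γ.map Prod.snd = ν},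
    (∫ q, dist q.1 q.2 ^ p ∂(γ : Measure (X × X))) ^ (1 / p)

/-- Pushforward of a measure on `ℝ^d` under the projection `x ↦ ⟨v, x⟩`. -/
noncomputable def projMeasure {d : ℕ} (v : EuclideanSpace ℝ (Fin d))
    (μ : Measure (EuclideanSpace ℝ (Fin d))) : Measure ℝ :=
  μ.map (fun x => (inner ℝ v x : ℝ))

section helpers

lemma map_fst_eq {X Y : Type*} [MeasurableSpace X] [MeasurableSpace Y] (ρ : Measure (X × Y)) :
    ρ.map Prod.fst = ρ.fst := rfl

lemma map_snd_eq {X Y : Type*} [MeasurableSpace X] [MeasurableSpace Y] (ρ : Measure (X × Y)) :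
    ρ.map Prod.snd = ρ.snd := rfl

variable {p : ℝ}

lemma rpow_integral_eq {X : Type*} [MeasurableSpace X] {m : Measure X} {f : X → ℝ}
    (hf : Measurable f) (hp : 0 < p) :
    (∫ x, |f x| ^ p ∂m) ^ (1 / p)
      = ((∫⁻ x, (‖f x‖₊ : ℝ≥0∞) ^ p ∂m) ^ (1 / p)).toReal := by
  rw [integral_eq_lintegral_of_nonneg_ae
      (Filter.Eventually.of_forall fun x => Real.rpow_nonneg (abs_nonneg _) p)
      ((hf.abs.pow_const p).aestronglyMeasurable)]
  have : ∀ x, ENNReal.ofReal (|f x| ^ p) = (‖f x‖₊ : ℝ≥0∞) ^ p := by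
    intro x
    rw [← ENNReal.ofReal_rpow_of_nonneg (abs_nonneg _) hp.le, ← enorm_eq_nnnorm, Real.enorm_eq_ofReal_abs]
  simp_rw [this, ENNReal.toReal_rpow]

lemma proj_lintegral_le {d : ℕ} (m : Measure (EuclideanSpace ℝ (Fin d)))
    (w : EuclideanSpace ℝ (Fin d)) (hp : 0 < p) :
    ∫⁻ x, (‖(inner ℝ w x : ℝ)‖₊ : ℝ≥0∞) ^ p ∂m
      ≤ (‖w‖₊ : ℝ≥0∞) ^ p * ∫⁻ x, (‖x‖₊ : ℝ≥0∞) ^ p ∂m := by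
  rw [← lintegral_const_mul' _ _ (ENNReal.rpow_lt_top_of_nonneg hp.le ENNReal.coe_ne_top).ne]
  refine lintegral_mono fun x => ?_
  rw [← ENNReal.mul_rpow_of_nonneg _ _ hp.le]
  refine ENNReal.rpow_le_rpow ?_ hp.le
  rw [← ENNReal.coe_mul]
  exact_mod_cast nnnorm_inner_le_nnnorm (𝕜 := ℝ) w x

lemma lp_tri {X : Type*} [MeasurableSpace X] {m : Measure X} {f g : X → ℝ} (hp : 1 ≤ p)
    (hf : Measurable f) (hg : Measurable g) :
    (∫⁻ x, (‖f x + g x‖₊ : ℝ≥0∞) ^ p ∂m) ^ (1 / p)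
      ≤ (∫⁻ x, (‖f x‖₊ : ℝ≥0∞) ^ p ∂m) ^ (1 / p)
        + (∫⁻ x, (‖g x‖₊ : ℝ≥0∞) ^ p ∂m) ^ (1 / p) := by
  have h0 : (0 : ℝ) ≤ p := le_trans zero_le_one hp
  calc (∫⁻ x, (‖f x + g x‖₊ : ℝ≥0∞) ^ p ∂m) ^ (1 / p)
      ≤ (∫⁻ x, ((‖f x‖₊ : ℝ≥0∞) + (‖g x‖₊ : ℝ≥0∞)) ^ p ∂m) ^ (1 / p) := by
        refine ENNReal.rpow_le_rpow (lintegral_mono fun x => ?_) (by positivity)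
        refine ENNReal.rpow_le_rpow ?_ h0
        rw [← ENNReal.coe_add]
        exact_mod_cast nnnorm_add_le (f x) (g x)
    _ ≤ _ := ENNReal.lintegral_Lp_add_le
        (hf.nnnorm.coe_nnreal_ennreal.aemeasurable)
        (hg.nnnorm.coe_nnreal_ennreal.aemeasurable) hp

lemma lp_fin {X : Type*} [MeasurableSpace X] {m : Measure X} {f g : X → ℝ} (hp : 1 ≤ p)
    (hf : Measurable f) (hg : Measurable g)
    (hf' : ∫⁻ x, (‖f x‖₊ : ℝ≥0∞) ^ p ∂m ≠ ∞) (hg' : ∫⁻ x, (‖g x‖₊ : ℝ≥0∞) ^ p ∂m ≠ ∞) :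
    ∫⁻ x, (‖f x - g x‖₊ : ℝ≥0∞) ^ p ∂m ≠ ∞ := by
  have h0 : (0 : ℝ) < p := lt_of_lt_of_le one_pos hp
  have h := lp_tri (m := m) (f := f) (g := -g) hp hf hg.neg
  simp only [Pi.neg_apply, ← sub_eq_add_neg, nnnorm_neg] at h
  intro hcontra
  rw [hcontra, ENNReal.top_rpow_of_pos (by positivity)] at h
  exact (lt_irrefl ⊤ (lt_of_le_of_lt h (ENNReal.add_lt_top.2
    ⟨ENNReal.rpow_lt_top_of_nonneg (by positivity) hf',
     ENNReal.rpow_lt_top_of_nonneg (by positivity) hg'⟩))).elim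

lemma ennnorm_rpow (x : ℝ) (hx : 0 ≤ x) (hp0 : 0 ≤ p) :
    (‖x ^ p‖₊ : ℝ≥0∞) = (‖x‖₊ : ℝ≥0∞) ^ p := by
  rw [← enorm_eq_nnnorm, Real.enorm_eq_ofReal (Real.rpow_nonneg hx p),
    ← ENNReal.ofReal_rpow_of_nonneg hx hp0, ← enorm_eq_nnnorm, Real.enorm_eq_ofReal hx]

lemma glue_exists (γ α β : Measure (ℝ × ℝ))
    [IsProbabilityMeasure γ] [IsProbabilityMeasure α] [IsProbabilityMeasure β]
    (h1 : γ.map Prod.fst = α.map Prod.fst) (h2 : γ.map Prod.snd = β.map Prod.fst) :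
    ∃ τ : Measure ((ℝ × ℝ) × (ℝ × ℝ)), IsProbabilityMeasure τ ∧
      τ.map (fun q => (q.1.1, q.2.1)) = α ∧
      τ.map (fun q => (q.1.2, q.2.2)) = β ∧
      τ.map Prod.fst = γ := by
  classical
  set κ₁ := α.condKernel with hκ₁
  set κ₂ := β.condKernel with hκ₂
  set κ := (κ₁.comap Prod.fst measurable_fst) ×ₖ (κ₂.comap Prod.snd measurable_snd) with hκ
  have hmeas1 : Measurable fun q : (ℝ × ℝ) × (ℝ × ℝ) => (q.1.1, q.2.1) :=
    (measurable_fst.comp measurable_fst).prodMk (measurable_fst.comp measurable_snd)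
  have hmeas2 : Measurable fun q : (ℝ × ℝ) × (ℝ × ℝ) => (q.1.2, q.2.2) :=
    (measurable_snd.comp measurable_fst).prodMk (measurable_snd.comp measurable_snd)
  refine ⟨γ ⊗ₘ κ, inferInstance, ?_, ?_, ?_⟩
  · ext s hs
    rw [Measure.map_apply hmeas1 hs, Measure.compProd_apply (hmeas1 hs)]
    have step1 : ∀ r : ℝ × ℝ, κ r (Prod.mk r ⁻¹' ((fun q : (ℝ × ℝ) × (ℝ × ℝ) => (q.1.1, q.2.1)) ⁻¹' s))
        = κ₁ r.1 (Prod.mk r.1 ⁻¹' s) := by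
      intro r
      have hpre : (Prod.mk r ⁻¹' ((fun q : (ℝ × ℝ) × (ℝ × ℝ) => (q.1.1, q.2.1)) ⁻¹' s))
          = Prod.fst ⁻¹' (Prod.mk r.1 ⁻¹' s) := rfl
      rw [hpre, hκ, Kernel.prod_apply, Kernel.comap_apply, Kernel.comap_apply,
        ← Measure.fst_apply (measurable_prodMk_left hs), Measure.fst_prod]
    calc ∫⁻ r, κ r (Prod.mk r ⁻¹' ((fun q : (ℝ × ℝ) × (ℝ × ℝ) => (q.1.1, q.2.1)) ⁻¹' s)) ∂γ
        = ∫⁻ r, κ₁ r.1 (Prod.mk r.1 ⁻¹' s) ∂γ := lintegral_congr step1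
      _ = ∫⁻ a, κ₁ a (Prod.mk a ⁻¹' s) ∂(γ.map Prod.fst) :=
          (lintegral_map (Kernel.measurable_kernel_prodMk_left hs) measurable_fst).symm
      _ = ∫⁻ a, κ₁ a (Prod.mk a ⁻¹' s) ∂α.fst := by rw [h1, map_fst_eq]
      _ = (α.fst ⊗ₘ κ₁) s := (Measure.compProd_apply hs).symm
      _ = α s := by rw [hκ₁, α.disintegrate α.condKernel]
  · ext s hs
    rw [Measure.map_apply hmeas2 hs, Measure.compProd_apply (hmeas2 hs)]
    have step1 : ∀ r : ℝ × ℝ, κ r (Prod.mk r ⁻¹' ((fun q : (ℝ × ℝ) × (ℝ × ℝ) => (q.1.2, q.2.2)) ⁻¹' s))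
        = κ₂ r.2 (Prod.mk r.2 ⁻¹' s) := by
      intro r
      have hpre : (Prod.mk r ⁻¹' ((fun q : (ℝ × ℝ) × (ℝ × ℝ) => (q.1.2, q.2.2)) ⁻¹' s))
          = Prod.snd ⁻¹' (Prod.mk r.2 ⁻¹' s) := rfl
      rw [hpre, hκ, Kernel.prod_apply, Kernel.comap_apply, Kernel.comap_apply,
        ← Measure.snd_apply (measurable_prodMk_left hs), Measure.snd_prod]
    calc ∫⁻ r, κ r (Prod.mk r ⁻¹' ((fun q : (ℝ × ℝ) × (ℝ × ℝ) => (q.1.2, q.2.2)) ⁻¹' s)) ∂γ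
        = ∫⁻ r, κ₂ r.2 (Prod.mk r.2 ⁻¹' s) ∂γ := lintegral_congr step1
      _ = ∫⁻ a, κ₂ a (Prod.mk a ⁻¹' s) ∂(γ.map Prod.snd) :=
          (lintegral_map (Kernel.measurable_kernel_prodMk_left hs) measurable_snd).symm
      _ = ∫⁻ a, κ₂ a (Prod.mk a ⁻¹' s) ∂β.fst := by rw [h2, map_fst_eq]
      _ = (β.fst ⊗ₘ κ₂) s := (Measure.compProd_apply hs).symm
      _ = β s := by rw [hκ₂, β.disintegrate β.condKernel]
  · rw [map_fst_eq, Measure.fst_compProd]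

end helpers

lemma wass_le {d : ℕ} {p : ℝ} (hp : 1 ≤ p)
    (μ ν : Measure (EuclideanSpace ℝ (Fin d)))
    [IsProbabilityMeasure μ] [IsProbabilityMeasure ν]
    (hμ : Integrable (fun x => ‖x‖ ^ p) μ) (hν : Integrable (fun x => ‖x‖ ^ p) ν)
    (u v : EuclideanSpace ℝ (Fin d)) :
    wassersteinDist p (projMeasure v μ) (projMeasure v ν) ≤
      wassersteinDist p (projMeasure u μ) (projMeasure u ν) +
      ((∫ x, ‖x‖ ^ p ∂μ) ^ (1 / p) + (∫ x, ‖x‖ ^ p ∂ν) ^ (1 / p)) * ‖u - v‖ := by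
  classical
  have hp0 : (0 : ℝ) < p := lt_of_lt_of_le one_pos hp
  have hT : ∀ w : EuclideanSpace ℝ (Fin d), Measurable fun x : EuclideanSpace ℝ (Fin d) =>
      (inner ℝ w x : ℝ) := fun w => (Continuous.inner continuous_const continuous_id).measurable
  haveI hpm : ∀ (w : EuclideanSpace ℝ (Fin d)) (m : Measure (EuclideanSpace ℝ (Fin d)))
      [IsProbabilityMeasure m], IsProbabilityMeasure (projMeasure w m) := by
    intro w m hm
    rw [projMeasure]
    exact Measure.isProbabilityMeasure_map (hT w).aemeasurable
  haveI := hpm u μ; haveI := hpm u ν; haveI := hpm v μ; haveI := hpm v ν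
  -- moments
  set Lμ := ∫⁻ x, (‖x‖₊ : ℝ≥0∞) ^ p ∂μ with hLμdef
  set Lν := ∫⁻ x, (‖x‖₊ : ℝ≥0∞) ^ p ∂ν with hLνdef
  have hLμfin : Lμ ≠ ∞ := by
    have h2 : ∫⁻ x, (‖‖x‖ ^ p‖₊ : ℝ≥0∞) ∂μ < ∞ := hμ.2
    refine ne_of_lt (lt_of_le_of_lt (le_of_eq ?_) h2)
    exact lintegral_congr fun x =>
      (by rw [ennnorm_rpow ‖x‖ (norm_nonneg x) hp0.le, nnnorm_norm] :
        (‖‖x‖ ^ p‖₊ : ℝ≥0∞) = (‖x‖₊ : ℝ≥0∞) ^ p).symm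
  have hLνfin : Lν ≠ ∞ := by
    have h2 : ∫⁻ x, (‖‖x‖ ^ p‖₊ : ℝ≥0∞) ∂ν < ∞ := hν.2
    refine ne_of_lt (lt_of_le_of_lt (le_of_eq ?_) h2)
    exact lintegral_congr fun x =>
      (by rw [ennnorm_rpow ‖x‖ (norm_nonneg x) hp0.le, nnnorm_norm] :
        (‖‖x‖ ^ p‖₊ : ℝ≥0∞) = (‖x‖₊ : ℝ≥0∞) ^ p).symm
  have hMμ : (∫ x, ‖x‖ ^ p ∂μ) ^ (1 / p) = (Lμ ^ (1 / p)).toReal := by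
    have h := rpow_integral_eq (m := μ) (f := fun x => ‖x‖) measurable_norm hp0
    simpa [abs_norm] using h
  have hMν : (∫ x, ‖x‖ ^ p ∂ν) ^ (1 / p) = (Lν ^ (1 / p)).toReal := by
    have h := rpow_integral_eq (m := ν) (f := fun x => ‖x‖) measurable_norm hp0
    simpa [abs_norm] using h
  -- measurability of the cost integrand
  have hsub : Measurable fun q : ℝ × ℝ => q.1 - q.2 := measurable_fst.sub measurable_snd
  have hcostmeas : Measurable fun q : ℝ × ℝ => (‖q.1 - q.2‖₊ : ℝ≥0∞) ^ p :=
    (hsub.nnnorm.coe_nnreal_ennreal).pow_const p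
  have hnormmeas : Measurable fun t : ℝ => (‖t‖₊ : ℝ≥0∞) ^ p :=
    (measurable_nnnorm.coe_nnreal_ennreal).pow_const p
  -- bounded below
  have hbdd : ∀ m₁ m₂ : Measure ℝ, BddBelow (Set.range fun γ :
      {γ : Measure (ℝ × ℝ) // γ.map Prod.fst = m₁ ∧ γ.map Prod.snd = m₂} =>
      (∫ q, dist q.1 q.2 ^ p ∂(γ : Measure (ℝ × ℝ))) ^ (1 / p)) := by
    intro m₁ m₂
    refine ⟨0, ?_⟩
    rintro x ⟨γ, rfl⟩
    exact Real.rpow_nonneg (integral_nonneg fun q => Real.rpow_nonneg dist_nonneg p) _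
  -- nonempty coupling index
  haveI hne : Nonempty {γ : Measure (ℝ × ℝ) //
      γ.map Prod.fst = projMeasure u μ ∧ γ.map Prod.snd = projMeasure u ν} :=
    ⟨⟨(projMeasure u μ).prod (projMeasure u ν),
      (map_fst_eq _).trans Measure.fst_prod, (map_snd_eq _).trans Measure.snd_prod⟩⟩
  -- projected moment finiteness
  have hprojμ : ∀ w : EuclideanSpace ℝ (Fin d),
      ∫⁻ t, (‖t‖₊ : ℝ≥0∞) ^ p ∂(projMeasure w μ) ≠ ∞ := by
    intro w
    rw [projMeasure, lintegral_map hnormmeas (hT w)]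
    exact ne_top_of_le_ne_top (ENNReal.mul_ne_top
      (ENNReal.rpow_ne_top_of_nonneg hp0.le ENNReal.coe_ne_top) hLμfin)
      (proj_lintegral_le μ w hp0)
  have hprojν : ∀ w : EuclideanSpace ℝ (Fin d),
      ∫⁻ t, (‖t‖₊ : ℝ≥0∞) ^ p ∂(projMeasure w ν) ≠ ∞ := by
    intro w
    rw [projMeasure, lintegral_map hnormmeas (hT w)]
    exact ne_top_of_le_ne_top (ENNReal.mul_ne_top
      (ENNReal.rpow_ne_top_of_nonneg hp0.le ENNReal.coe_ne_top) hLνfin)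
      (proj_lintegral_le ν w hp0)
  -- the key bound for an arbitrary coupling
  have main : ∀ γ' : {γ : Measure (ℝ × ℝ) //
      γ.map Prod.fst = projMeasure u μ ∧ γ.map Prod.snd = projMeasure u ν},
      wassersteinDist p (projMeasure v μ) (projMeasure v ν) ≤
        (∫ q, dist q.1 q.2 ^ p ∂(γ' : Measure (ℝ × ℝ))) ^ (1 / p) +
        ((∫ x, ‖x‖ ^ p ∂μ) ^ (1 / p) + (∫ x, ‖x‖ ^ p ∂ν) ^ (1 / p)) * ‖u - v‖ := by
    rintro ⟨γ, hγ1, hγ2⟩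
    haveI hγprob : IsProbabilityMeasure γ := by
      constructor
      have h := Measure.map_apply (μ := γ) measurable_fst MeasurableSet.univ
      simp only [Set.preimage_univ] at h
      rw [← h, hγ1]
      exact measure_univ
    set α := μ.map (fun x => ((inner ℝ u x : ℝ), (inner ℝ v x : ℝ))) with hαdef
    set β := ν.map (fun x => ((inner ℝ u x : ℝ), (inner ℝ v x : ℝ))) with hβdef
    have hαm : Measurable fun x : EuclideanSpace ℝ (Fin d) =>
        ((inner ℝ u x : ℝ), (inner ℝ v x : ℝ)) := (hT u).prodMk (hT v)
    haveI : IsProbabilityMeasure α := Measure.isProbabilityMeasure_map hαm.aemeasurable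
    haveI : IsProbabilityMeasure β := Measure.isProbabilityMeasure_map hαm.aemeasurable
    have hαfst : α.map Prod.fst = projMeasure u μ := by
      rw [hαdef, Measure.map_map measurable_fst hαm, projMeasure]; rfl
    have hαsnd : α.map Prod.snd = projMeasure v μ := by
      rw [hαdef, Measure.map_map measurable_snd hαm, projMeasure]; rfl
    have hβfst : β.map Prod.fst = projMeasure u ν := by
      rw [hβdef, Measure.map_map measurable_fst hαm, projMeasure]; rfl
    have hβsnd : β.map Prod.snd = projMeasure v ν := by
      rw [hβdef, Measure.map_map measurable_snd hαm, projMeasure]; rfl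
    obtain ⟨τ, hτprob, hA, hB, hC⟩ :=
      glue_exists γ α β (hγ1.trans hαfst.symm) (hγ2.trans hβfst.symm)
    haveI := hτprob
    have hmeas1 : Measurable fun q : (ℝ × ℝ) × (ℝ × ℝ) => (q.1.1, q.2.1) :=
      (measurable_fst.comp measurable_fst).prodMk (measurable_fst.comp measurable_snd)
    have hmeas2 : Measurable fun q : (ℝ × ℝ) × (ℝ × ℝ) => (q.1.2, q.2.2) :=
      (measurable_snd.comp measurable_fst).prodMk (measurable_snd.comp measurable_snd)
    set π := τ.map Prod.snd with hπdef
    have hπ1 : π.map Prod.fst = projMeasure v μ := by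
      rw [hπdef, Measure.map_map measurable_fst measurable_snd]
      have h : τ.map (fun q : (ℝ × ℝ) × (ℝ × ℝ) => q.2.1)
          = (τ.map (fun q : (ℝ × ℝ) × (ℝ × ℝ) => (q.1.1, q.2.1))).map Prod.snd := by
        rw [Measure.map_map measurable_snd hmeas1]; rfl
      calc τ.map (Prod.fst ∘ Prod.snd) = τ.map (fun q : (ℝ × ℝ) × (ℝ × ℝ) => q.2.1) := rfl
        _ = (τ.map (fun q : (ℝ × ℝ) × (ℝ × ℝ) => (q.1.1, q.2.1))).map Prod.snd := h
        _ = projMeasure v μ := by rw [hA, hαsnd]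
    have hπ2 : π.map Prod.snd = projMeasure v ν := by
      rw [hπdef, Measure.map_map measurable_snd measurable_snd]
      have h : τ.map (fun q : (ℝ × ℝ) × (ℝ × ℝ) => q.2.2)
          = (τ.map (fun q : (ℝ × ℝ) × (ℝ × ℝ) => (q.1.2, q.2.2))).map Prod.snd := by
        rw [Measure.map_map measurable_snd hmeas2]; rfl
      calc τ.map (Prod.snd ∘ Prod.snd) = τ.map (fun q : (ℝ × ℝ) × (ℝ × ℝ) => q.2.2) := rfl
        _ = (τ.map (fun q : (ℝ × ℝ) × (ℝ × ℝ) => (q.1.2, q.2.2))).map Prod.snd := h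
        _ = projMeasure v ν := by rw [hB, hβsnd]
    -- lintegral cost quantities
    set Iγ := ∫⁻ q : ℝ × ℝ, (‖q.1 - q.2‖₊ : ℝ≥0∞) ^ p ∂γ with hIγdef
    set Iπ := ∫⁻ q : ℝ × ℝ, (‖q.1 - q.2‖₊ : ℝ≥0∞) ^ p ∂π with hIπdef
    have hγmargf : ∫⁻ q : ℝ × ℝ, (‖q.1‖₊ : ℝ≥0∞) ^ p ∂γ ≠ ∞ := by
      have h : ∫⁻ q : ℝ × ℝ, (‖q.1‖₊ : ℝ≥0∞) ^ p ∂γ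
          = ∫⁻ t, (‖t‖₊ : ℝ≥0∞) ^ p ∂(γ.map Prod.fst) := by
        rw [lintegral_map hnormmeas measurable_fst]
      rw [h, hγ1]
      exact hprojμ u
    have hγmargs : ∫⁻ q : ℝ × ℝ, (‖q.2‖₊ : ℝ≥0∞) ^ p ∂γ ≠ ∞ := by
      have h : ∫⁻ q : ℝ × ℝ, (‖q.2‖₊ : ℝ≥0∞) ^ p ∂γ
          = ∫⁻ t, (‖t‖₊ : ℝ≥0∞) ^ p ∂(γ.map Prod.snd) := by
        rw [lintegral_map hnormmeas measurable_snd]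
      rw [h, hγ2]
      exact hprojν u
    have hIγfin : Iγ ≠ ∞ := lp_fin hp measurable_fst measurable_snd hγmargf hγmargs
    -- the three pieces
    have hJ1 : ∫⁻ q : (ℝ × ℝ) × (ℝ × ℝ), (‖q.2.1 - q.1.1‖₊ : ℝ≥0∞) ^ p ∂τ
        ≤ (‖u - v‖₊ : ℝ≥0∞) ^ p * Lμ := by
      have h1 : ∫⁻ q : (ℝ × ℝ) × (ℝ × ℝ), (‖q.2.1 - q.1.1‖₊ : ℝ≥0∞) ^ p ∂τ
          = ∫⁻ r : ℝ × ℝ, (‖r.2 - r.1‖₊ : ℝ≥0∞) ^ p ∂α := by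
        rw [← hA, lintegral_map (f := fun r : ℝ × ℝ => (‖r.2 - r.1‖₊ : ℝ≥0∞) ^ p) ((measurable_snd.sub measurable_fst).nnnorm.coe_nnreal_ennreal.pow_const p) hmeas1]
      have h2 : ∫⁻ r : ℝ × ℝ, (‖r.2 - r.1‖₊ : ℝ≥0∞) ^ p ∂α
          = ∫⁻ x, (‖(inner ℝ (v - u) x : ℝ)‖₊ : ℝ≥0∞) ^ p ∂μ := by
        rw [hαdef, lintegral_map (f := fun r : ℝ × ℝ => (‖r.2 - r.1‖₊ : ℝ≥0∞) ^ p) ((measurable_snd.sub measurable_fst).nnnorm.coe_nnreal_ennreal.pow_const p) hαm]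
        exact lintegral_congr fun x => by rw [inner_sub_left]
      rw [h1, h2]
      have := proj_lintegral_le μ (v - u) hp0
      rwa [show ‖v - u‖₊ = ‖u - v‖₊ by rw [← neg_sub u v, nnnorm_neg]] at this
    have hJ3 : ∫⁻ q : (ℝ × ℝ) × (ℝ × ℝ), (‖q.1.2 - q.2.2‖₊ : ℝ≥0∞) ^ p ∂τ
        ≤ (‖u - v‖₊ : ℝ≥0∞) ^ p * Lν := by
      have h1 : ∫⁻ q : (ℝ × ℝ) × (ℝ × ℝ), (‖q.1.2 - q.2.2‖₊ : ℝ≥0∞) ^ p ∂τ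
          = ∫⁻ r : ℝ × ℝ, (‖r.1 - r.2‖₊ : ℝ≥0∞) ^ p ∂β := by
        rw [← hB, lintegral_map hcostmeas hmeas2]
      have h2 : ∫⁻ r : ℝ × ℝ, (‖r.1 - r.2‖₊ : ℝ≥0∞) ^ p ∂β
          = ∫⁻ x, (‖(inner ℝ (u - v) x : ℝ)‖₊ : ℝ≥0∞) ^ p ∂ν := by
        rw [hβdef, lintegral_map hcostmeas hαm]
        exact lintegral_congr fun x => by rw [inner_sub_left]
      rw [h1, h2]
      exact proj_lintegral_le ν (u - v) hp0
    have hJ2 : ∫⁻ q : (ℝ × ℝ) × (ℝ × ℝ), (‖q.1.1 - q.1.2‖₊ : ℝ≥0∞) ^ p ∂τ = Iγ := by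
      rw [hIγdef, ← hC, lintegral_map hcostmeas measurable_fst]
    -- Minkowski
    have hIπτ : Iπ = ∫⁻ q : (ℝ × ℝ) × (ℝ × ℝ), (‖q.2.1 - q.2.2‖₊ : ℝ≥0∞) ^ p ∂τ := by
      rw [hIπdef, hπdef, lintegral_map hcostmeas measurable_snd]
    have hf1 : Measurable fun q : (ℝ × ℝ) × (ℝ × ℝ) => q.2.1 - q.1.1 :=
      (measurable_fst.comp measurable_snd).sub (measurable_fst.comp measurable_fst)
    have hf2 : Measurable fun q : (ℝ × ℝ) × (ℝ × ℝ) => q.1.1 - q.1.2 :=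
      (measurable_fst.comp measurable_fst).sub (measurable_snd.comp measurable_fst)
    have hf3 : Measurable fun q : (ℝ × ℝ) × (ℝ × ℝ) => q.1.2 - q.2.2 :=
      (measurable_snd.comp measurable_fst).sub (measurable_snd.comp measurable_snd)
    have hmink : Iπ ^ (1 / p) ≤
        (∫⁻ q : (ℝ × ℝ) × (ℝ × ℝ), (‖q.2.1 - q.1.1‖₊ : ℝ≥0∞) ^ p ∂τ) ^ (1 / p)
        + (∫⁻ q : (ℝ × ℝ) × (ℝ × ℝ), (‖q.1.1 - q.1.2‖₊ : ℝ≥0∞) ^ p ∂τ) ^ (1 / p)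
        + (∫⁻ q : (ℝ × ℝ) × (ℝ × ℝ), (‖q.1.2 - q.2.2‖₊ : ℝ≥0∞) ^ p ∂τ) ^ (1 / p) := by
      rw [hIπτ]
      have hsum : ∀ q : (ℝ × ℝ) × (ℝ × ℝ),
          q.2.1 - q.2.2 = ((q.2.1 - q.1.1) + (q.1.1 - q.1.2)) + (q.1.2 - q.2.2) := by
        intro q; ring
      calc (∫⁻ q : (ℝ × ℝ) × (ℝ × ℝ), (‖q.2.1 - q.2.2‖₊ : ℝ≥0∞) ^ p ∂τ) ^ (1 / p)
          = (∫⁻ q : (ℝ × ℝ) × (ℝ × ℝ),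
              (‖((q.2.1 - q.1.1) + (q.1.1 - q.1.2)) + (q.1.2 - q.2.2)‖₊ : ℝ≥0∞) ^ p ∂τ) ^ (1 / p) := by
            congr 1
            exact lintegral_congr fun q => by rw [← hsum q]
        _ ≤ (∫⁻ q : (ℝ × ℝ) × (ℝ × ℝ),
              (‖(q.2.1 - q.1.1) + (q.1.1 - q.1.2)‖₊ : ℝ≥0∞) ^ p ∂τ) ^ (1 / p)
            + (∫⁻ q : (ℝ × ℝ) × (ℝ × ℝ), (‖q.1.2 - q.2.2‖₊ : ℝ≥0∞) ^ p ∂τ) ^ (1 / p) :=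
            lp_tri hp (hf1.add hf2) hf3
        _ ≤ _ := by
            gcongr
            exact lp_tri hp hf1 hf2
    -- assemble in ℝ≥0∞
    have hrpow_cancel : ∀ x : ℝ≥0∞, (x ^ p) ^ (1 / p) = x := by
      intro x
      rw [← ENNReal.rpow_mul, mul_one_div_cancel hp0.ne', ENNReal.rpow_one]
    have hbound : Iπ ^ (1 / p) ≤ Iγ ^ (1 / p)
        + (‖u - v‖₊ : ℝ≥0∞) * (Lμ ^ (1 / p) + Lν ^ (1 / p)) := by
      refine le_trans hmink ?_
      have b1 : (∫⁻ q : (ℝ × ℝ) × (ℝ × ℝ), (‖q.2.1 - q.1.1‖₊ : ℝ≥0∞) ^ p ∂τ) ^ (1 / p)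
          ≤ (‖u - v‖₊ : ℝ≥0∞) * Lμ ^ (1 / p) := by
        calc _ ≤ ((‖u - v‖₊ : ℝ≥0∞) ^ p * Lμ) ^ (1 / p) :=
              ENNReal.rpow_le_rpow hJ1 (by positivity)
          _ = (‖u - v‖₊ : ℝ≥0∞) * Lμ ^ (1 / p) := by
              rw [ENNReal.mul_rpow_of_nonneg _ _ (by positivity), hrpow_cancel]
      have b3 : (∫⁻ q : (ℝ × ℝ) × (ℝ × ℝ), (‖q.1.2 - q.2.2‖₊ : ℝ≥0∞) ^ p ∂τ) ^ (1 / p)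
          ≤ (‖u - v‖₊ : ℝ≥0∞) * Lν ^ (1 / p) := by
        calc _ ≤ ((‖u - v‖₊ : ℝ≥0∞) ^ p * Lν) ^ (1 / p) :=
              ENNReal.rpow_le_rpow hJ3 (by positivity)
          _ = (‖u - v‖₊ : ℝ≥0∞) * Lν ^ (1 / p) := by
              rw [ENNReal.mul_rpow_of_nonneg _ _ (by positivity), hrpow_cancel]
      have b2 : (∫⁻ q : (ℝ × ℝ) × (ℝ × ℝ), (‖q.1.1 - q.1.2‖₊ : ℝ≥0∞) ^ p ∂τ) ^ (1 / p)
          = Iγ ^ (1 / p) := by rw [hJ2]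
      calc _ ≤ ((‖u - v‖₊ : ℝ≥0∞) * Lμ ^ (1 / p) + Iγ ^ (1 / p))
            + (‖u - v‖₊ : ℝ≥0∞) * Lν ^ (1 / p) :=
            add_le_add (add_le_add b1 (le_of_eq b2)) b3
        _ = Iγ ^ (1 / p) + (‖u - v‖₊ : ℝ≥0∞) * (Lμ ^ (1 / p) + Lν ^ (1 / p)) := by ring
    -- back to the reals
    have hWle : wassersteinDist p (projMeasure v μ) (projMeasure v ν) ≤
        (∫ q, dist q.1 q.2 ^ p ∂π) ^ (1 / p) := by
      rw [wassersteinDist]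
      exact ciInf_le (hbdd _ _) ⟨π, hπ1, hπ2⟩
    have hcostπ : (∫ q, dist q.1 q.2 ^ p ∂π) ^ (1 / p) = (Iπ ^ (1 / p)).toReal := by
      rw [hIπdef]
      have h := rpow_integral_eq (m := π) (f := fun q : ℝ × ℝ => q.1 - q.2) hsub hp0
      simp_rw [Real.dist_eq]
      exact h
    have hcostγ : (∫ q, dist q.1 q.2 ^ p ∂γ) ^ (1 / p) = (Iγ ^ (1 / p)).toReal := by
      rw [hIγdef]
      have h := rpow_integral_eq (m := γ) (f := fun q : ℝ × ℝ => q.1 - q.2) hsub hp0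
      simp_rw [Real.dist_eq]
      exact h
    have hfinrhs : Iγ ^ (1 / p) + (‖u - v‖₊ : ℝ≥0∞) * (Lμ ^ (1 / p) + Lν ^ (1 / p)) ≠ ∞ := by
      refine ENNReal.add_ne_top.2 ⟨ENNReal.rpow_ne_top_of_nonneg (by positivity) hIγfin, ?_⟩
      exact ENNReal.mul_ne_top ENNReal.coe_ne_top (ENNReal.add_ne_top.2
        ⟨ENNReal.rpow_ne_top_of_nonneg (by positivity) hLμfin,
         ENNReal.rpow_ne_top_of_nonneg (by positivity) hLνfin⟩)
    have hreal : (Iπ ^ (1 / p)).toReal ≤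
        (Iγ ^ (1 / p)).toReal + ‖u - v‖ * ((Lμ ^ (1 / p)).toReal + (Lν ^ (1 / p)).toReal) := by
      have h := ENNReal.toReal_mono hfinrhs hbound
      rw [ENNReal.toReal_add (ENNReal.rpow_ne_top_of_nonneg (by positivity) hIγfin)
        (ENNReal.mul_ne_top ENNReal.coe_ne_top (ENNReal.add_ne_top.2
          ⟨ENNReal.rpow_ne_top_of_nonneg (by positivity) hLμfin,
           ENNReal.rpow_ne_top_of_nonneg (by positivity) hLνfin⟩)),
        ENNReal.toReal_mul,
        ENNReal.toReal_add (ENNReal.rpow_ne_top_of_nonneg (by positivity) hLμfin)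
          (ENNReal.rpow_ne_top_of_nonneg (by positivity) hLνfin)] at h
      simpa [coe_nnnorm] using h
    calc wassersteinDist p (projMeasure v μ) (projMeasure v ν)
        ≤ (∫ q, dist q.1 q.2 ^ p ∂π) ^ (1 / p) := hWle
      _ = (Iπ ^ (1 / p)).toReal := hcostπ
      _ ≤ (Iγ ^ (1 / p)).toReal + ‖u - v‖ * ((Lμ ^ (1 / p)).toReal + (Lν ^ (1 / p)).toReal) := hreal
      _ = (∫ q, dist q.1 q.2 ^ p ∂γ) ^ (1 / p)
          + ((∫ x, ‖x‖ ^ p ∂μ) ^ (1 / p) + (∫ x, ‖x‖ ^ p ∂ν) ^ (1 / p)) * ‖u - v‖ := by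
          rw [hcostγ, hMμ, hMν]; ring
  have step : wassersteinDist p (projMeasure v μ) (projMeasure v ν) -
      ((∫ x, ‖x‖ ^ p ∂μ) ^ (1 / p) + (∫ x, ‖x‖ ^ p ∂ν) ^ (1 / p)) * ‖u - v‖ ≤
      wassersteinDist p (projMeasure u μ) (projMeasure u ν) := by
    conv_rhs => rw [wassersteinDist]
    exact le_ciInf fun γ' => by linarith [main γ']
  linarith

theorem stmt2 (d : ℕ) (p : ℝ) (hp : 1 ≤ p)
    (μ ν : Measure (EuclideanSpace ℝ (Fin d)))
    [IsProbabilityMeasure μ] [IsProbabilityMeasure ν]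
    (hμ : Integrable (fun x => ‖x‖ ^ p) μ) (hν : Integrable (fun x => ‖x‖ ^ p) ν) :
    (∀ u v : EuclideanSpace ℝ (Fin d), ‖u‖ = 1 → ‖v‖ = 1 →
      |wassersteinDist p (projMeasure u μ) (projMeasure u ν) -
        wassersteinDist p (projMeasure v μ) (projMeasure v ν)| ≤
      ((∫ x, ‖x‖ ^ p ∂μ) ^ (1 / p) + (∫ x, ‖x‖ ^ p ∂ν) ^ (1 / p)) * ‖u - v‖) ∧
    (0 < d → ∃ v₀ : EuclideanSpace ℝ (Fin d), ‖v₀‖ = 1 ∧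
      ∀ v : EuclideanSpace ℝ (Fin d), ‖v‖ = 1 →
        wassersteinDist p (projMeasure v μ) (projMeasure v ν) ≤
          wassersteinDist p (projMeasure v₀ μ) (projMeasure v₀ ν)) := by
  set C := (∫ x, ‖x‖ ^ p ∂μ) ^ (1 / p) + (∫ x, ‖x‖ ^ p ∂ν) ^ (1 / p) with hCdef
  have hC0 : 0 ≤ C :=
    add_nonneg
      (Real.rpow_nonneg (integral_nonneg fun x => Real.rpow_nonneg (norm_nonneg x) p) _)
      (Real.rpow_nonneg (integral_nonneg fun x => Real.rpow_nonneg (norm_nonneg x) p) _)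
  have hlip : ∀ u v : EuclideanSpace ℝ (Fin d),
      |wassersteinDist p (projMeasure u μ) (projMeasure u ν) -
        wassersteinDist p (projMeasure v μ) (projMeasure v ν)| ≤ C * ‖u - v‖ := by
    intro u v
    rw [abs_sub_le_iff]
    have h1 := wass_le hp μ ν hμ hν v u
    have h2 := wass_le hp μ ν hμ hν u v
    rw [norm_sub_rev] at h1
    rw [← hCdef] at h1 h2
    constructor <;> linarith
  refine ⟨fun u v _ _ => hlip u v, fun hd => ?_⟩
  set f : EuclideanSpace ℝ (Fin d) → ℝ :=
    fun v => wassersteinDist p (projMeasure v μ) (projMeasure v ν) with hfdef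
  have hcont : ContinuousOn f (Metric.sphere (0 : EuclideanSpace ℝ (Fin d)) 1) := by
    refine LipschitzOnWith.continuousOn (K := C.toNNReal) ?_
    rw [lipschitzOnWith_iff_dist_le_mul]
    intro x _ y _
    rw [Real.dist_eq, dist_eq_norm, Real.coe_toNNReal C hC0]
    exact hlip x y
  have hne : (Metric.sphere (0 : EuclideanSpace ℝ (Fin d)) 1).Nonempty :=
    ⟨EuclideanSpace.single ⟨0, hd⟩ (1 : ℝ), by
      simp [mem_sphere_zero_iff_norm, EuclideanSpace.norm_single]⟩
  obtain ⟨v₀, hv₀S, hmax⟩ :=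
    (isCompact_sphere (0 : EuclideanSpace ℝ (Fin d)) 1).exists_isMaxOn hne hcont
  exact ⟨v₀, by simpa [mem_sphere_zero_iff_norm] using hv₀S,
    fun v hv => hmax (by simp [mem_sphere_zero_iff_norm, hv])⟩
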